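/- Let G be a d-regular triangle-free graph on n vertices and λ > 0. Then the occupancy fraction satisfies (1/n)·ᾱ_G(λ) ≤ λ(1+λ)^{d-1} / (2(1+λ)^d − 1). -/

import Mathlib

open Finset MeasureTheory Real
open scoped Classical

noncomputable def indSets {V : Type*} [Fintype V] (G : SimpleGraph V) : Finset (Finset V) :=
  Finset.univ.filter (fun s => ∀ u ∈ s, ∀ v ∈ s, ¬ G.Adj u v)

/-- The independence polynomial (hard-core partition function). -/
noncomputable def indPoly {V : Type*} [Fintype V] (G : SimpleGraph V) (x : ℝ) : ℝ :=
  ∑ s ∈ indSets G, x ^ s.card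

/-- Expected size of an independent set from the hard-core model at fugacity x. -/
noncomputable def avgSize {V : Type*} [Fintype V] (G : SimpleGraph V) (x : ℝ) : ℝ :=
  x * deriv (indPoly G) x / indPoly G x

/- ### Auxiliary lemmas -/

lemma cast_mul_pow_pred (a : ℝ) (k : ℕ) : (k : ℝ) * a ^ (k - 1) * a = k * a ^ k := by
  cases k with
  | zero => simp
  | succ n => simp [pow_succ]; ring

lemma key_ineq (l : ℝ) (hl : 0 < l) (d u : ℕ) (hd : 1 ≤ d) (hu : u ≤ d) :
    ((1 + l) ^ d : ℝ) * d ≤ (1 + l) ^ u * ((1 + l) ^ d * d - ((1 + l) ^ d - 1) * u) := by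
  have hb : (0:ℝ) < 1 + l := by linarith
  have hd0 : (0:ℝ) < (d:ℝ) := by exact_mod_cast hd
  have hs0 : (0:ℝ) < (1+l)^d := pow_pos hb d
  set s : ℝ := (1 + l) ^ d with hs_def
  set θ : ℝ := (u:ℝ) / d with hθ_def
  have hθ0 : 0 ≤ θ := div_nonneg (Nat.cast_nonneg u) hd0.le
  have hθ1 : θ ≤ 1 := (div_le_one hd0).2 (by exact_mod_cast hu)
  have hdθ : (d:ℝ) * θ = u := by rw [hθ_def]; field_simp
  have ht : s ^ θ = ((1+l):ℝ) ^ u := by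
    rw [hs_def, ← Real.rpow_natCast (1+l) d, ← Real.rpow_mul hb.le, hdθ, Real.rpow_natCast]
  have hgm : (s * d) ^ (1-θ) * (d:ℝ) ^ θ ≤ (1-θ) * (s*d) + θ * d :=
    Real.geom_mean_le_arith_mean2_weighted (by linarith) hθ0 (by positivity) hd0.le (by ring)
  have hmul := mul_le_mul_of_nonneg_left hgm (Real.rpow_nonneg hs0.le θ)
  have hlhs : s ^ θ * ((s*d) ^ (1-θ) * (d:ℝ) ^ θ) = s * d := by
    rw [Real.mul_rpow hs0.le hd0.le]
    rw [show s ^ θ * (s ^ (1-θ) * (d:ℝ) ^ (1-θ) * (d:ℝ) ^ θ)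
        = (s ^ θ * s ^ (1-θ)) * ((d:ℝ) ^ (1-θ) * (d:ℝ) ^ θ) by ring]
    rw [← Real.rpow_add hs0, ← Real.rpow_add hd0]
    norm_num
  have hrhs : s ^ θ * ((1-θ) * (s*d) + θ * d) = (1+l)^u * (s * (d:ℝ) - (s - 1) * (u:ℝ)) := by
    rw [ht]
    linear_combination ((1:ℝ)+l)^u * (1 - s) * hdθ
  calc s * (d:ℝ) = s ^ θ * ((s*d) ^ (1-θ) * (d:ℝ) ^ θ) := hlhs.symm
    _ ≤ s ^ θ * ((1-θ) * (s*d) + θ * d) := hmul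
    _ = (1+l)^u * (s * (d:ℝ) - (s - 1) * (u:ℝ)) := hrhs

lemma local_ineq (l : ℝ) (hl : 0 < l) (d u : ℕ) (hd : 1 ≤ d) (hu : u ≤ d) :
    l * (1 + (1 - (1+l)^d) / ((d:ℝ) * (2*(1+l)^d - 1)) * d)
      - (1 - (1+l)^d) / ((d:ℝ) * (2*(1+l)^d - 1)) * ((u:ℝ) * l * (1+l)^(u-1))
    ≤ l * (1+l)^(d-1) / (2*(1+l)^d - 1) * ((1+l)^u + l) := by
  have hb : (0:ℝ) < 1 + l := by linarith
  have hd0 : (0:ℝ) < (d:ℝ) := by exact_mod_cast hd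
  have hs1 : (1:ℝ) ≤ (1+l)^d := one_le_pow₀ (by linarith)
  have h2s : (0:ℝ) < 2*(1+l)^d - 1 := by linarith
  have hq : ((1+l):ℝ)^(d-1) * (1+l) = (1+l)^d := by
    conv_rhs => rw [← Nat.sub_add_cancel hd]
    rw [pow_succ]
  have hut : ((u:ℝ)) * (1+l)^(u-1) * (1+l) = u * (1+l)^u := cast_mul_pow_pred (1+l) u
  have hkey := key_ineq l hl d u hd hu
  have hkey' := mul_le_mul_of_nonneg_left hkey hl.le
  set s : ℝ := (1+l)^d
  set t : ℝ := (1+l)^u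
  set q : ℝ := (1+l)^(d-1)
  set r : ℝ := (1+l)^(u-1)
  have hDne : ((d:ℝ) * (2*s - 1)) ≠ 0 := by positivity
  have hc : (1 - s) / ((d:ℝ) * (2*s - 1)) * ((d:ℝ) * (2*s - 1)) = 1 - s :=
    div_mul_cancel₀ _ hDne
  have hinv : (2*s - 1)⁻¹ * (2*s - 1) = 1 := inv_mul_cancel₀ (ne_of_gt h2s)
  have eL : (l * (1 + (1 - s) / ((d:ℝ) * (2*s - 1)) * d)
        - (1 - s) / ((d:ℝ) * (2*s - 1)) * ((u:ℝ) * l * r))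
        * ((d:ℝ) * (2*s - 1) * (1+l))
      = l*(1+l)*(d:ℝ)*s + (s-1)*((u:ℝ)*l*t) := by
    linear_combination (l*(d:ℝ)*(1+l) - (u:ℝ)*l*r*(1+l)) * hc + (s-1)*l*hut
  have eR : (l * q / (2*s - 1) * (t + l)) * ((d:ℝ) * (2*s - 1) * (1+l))
      = l*(d:ℝ)*s*(t+l) := by
    linear_combination (l*q*(t+l)*(d:ℝ)*(1+l)) * hinv + (l*(d:ℝ)*(t+l)) * hq
  refine le_of_mul_le_mul_right ?_ (by positivity : (0:ℝ) < (d:ℝ) * (2*s - 1) * (1+l))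
  rw [eL, eR]
  linarith [hkey']


section Aux

variable {V : Type*} [Fintype V]

lemma mem_indSets {G : SimpleGraph V} {s : Finset V} :
    s ∈ indSets G ↔ ∀ u ∈ s, ∀ v ∈ s, ¬ G.Adj u v := by
  simp [indSets]

lemma mem_nbr {G : SimpleGraph V} {v w : V} : w ∈ G.neighborFinset v ↔ G.Adj v w :=
  SimpleGraph.mem_neighborFinset G v w

/-- Independent sets avoiding the closed neighborhood of `v`. -/
noncomputable def outSets (G : SimpleGraph V) (v : V) : Finset (Finset V) :=
  (indSets G).filter (fun J => v ∉ J ∧ ∀ u ∈ J, ¬ G.Adj v u)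

/-- Neighbors of `v` uncovered by `J`. -/
noncomputable def uncov (G : SimpleGraph V) (v : V) (J : Finset V) : Finset V :=
  (G.neighborFinset v).filter (fun u => ∀ w ∈ J, ¬ G.Adj u w)

/-- Possible local configurations on the closed neighborhood of `v`, given outside set `J`. -/
noncomputable def localSets (G : SimpleGraph V) (v : V) (J : Finset V) : Finset (Finset V) :=
  insert {v} (uncov G v J).powerset

lemma v_not_mem_uncov (G : SimpleGraph V) (v : V) (J : Finset V) : v ∉ uncov G v J := by
  intro h
  have := (Finset.mem_filter.1 h).1
  rw [mem_nbr] at this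
  exact G.loopless.irrefl v this

lemma singleton_not_mem_powerset_uncov (G : SimpleGraph V) (v : V) (J : Finset V) :
    ({v} : Finset V) ∉ (uncov G v J).powerset := by
  intro h
  exact v_not_mem_uncov G v J (Finset.mem_powerset.1 h (Finset.mem_singleton_self v))

/-- Basic structure facts for a pair `(J, T)`. -/
lemma pair_facts {G : SimpleGraph V} {v : V} {J T : Finset V}
    (hJ : J ∈ outSets G v) (hT : T ∈ localSets G v J) :
    Disjoint J T ∧ ((v ∈ J ∪ T) ↔ T = {v}) ∧
      ((J ∪ T) ∩ G.neighborFinset v = T \ {v}) := by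
  obtain ⟨hJind, hvJ, hadjJ⟩ := by
    simpa [outSets, mem_indSets] using hJ
  have hJN : ∀ x ∈ J, x ∉ G.neighborFinset v := by
    intro x hx hxN
    exact hadjJ x hx (mem_nbr.1 hxN)
  rcases Finset.mem_insert.1 hT with hTv | hTU
  · subst hTv
    refine ⟨by simp [Finset.disjoint_singleton_right, hvJ], by simp, ?_⟩
    rw [Finset.sdiff_self]
    ext x
    simp only [Finset.mem_inter, Finset.mem_union, Finset.mem_singleton, Finset.notMem_empty,
      iff_false, not_and]
    rintro (hx1 | hx2) hxN
    · exact hJN x hx1 hxN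
    · rw [hx2] at hxN; exact G.loopless.irrefl v (mem_nbr.1 hxN)
  · have hTU' := Finset.mem_powerset.1 hTU
    have hTN : T ⊆ G.neighborFinset v := fun x hx => (Finset.mem_filter.1 (hTU' hx)).1
    have hvT : v ∉ T := fun h => G.loopless.irrefl v (mem_nbr.1 (hTN h))
    have hTne : T ≠ {v} := by
      intro h; exact hvT (h ▸ Finset.mem_singleton_self v)
    refine ⟨?_, ?_, ?_⟩
    · rw [Finset.disjoint_left]
      intro x hxJ hxT
      exact hJN x hxJ (hTN hxT)
    · simp [hvJ, hvT, hTne]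
    · rw [Finset.sdiff_singleton_eq_erase, Finset.erase_eq_of_notMem hvT]
      ext x
      simp only [Finset.mem_inter, Finset.mem_union]
      constructor
      · rintro ⟨hx1 | hx2, hxN⟩
        · exact absurd hxN (hJN x hx1)
        · exact hx2
      · intro hx; exact ⟨Or.inr hx, hTN hx⟩

/-- The partition of independent sets according to the part outside `N[v]`. -/
lemma partition (G : SimpleGraph V) (htf : G.CliqueFree 3) (v : V) (f : Finset V → ℝ) :
    ∑ s ∈ indSets G, f s = ∑ J ∈ outSets G v, ∑ T ∈ localSets G v J, f (J ∪ T) := by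
  rw [← Finset.sum_sigma (outSets G v) (fun J => localSets G v J) (fun p => f (p.1 ∪ p.2))]
  refine (Finset.sum_nbij' (i := fun p => p.1 ∪ p.2)
    (j := fun s => ⟨s \ insert v (G.neighborFinset v), s ∩ insert v (G.neighborFinset v)⟩)
    ?_ ?_ ?_ ?_ ?_).symm
  · -- i maps into indSets
    rintro ⟨J, T⟩ hp
    rw [Finset.mem_sigma] at hp
    obtain ⟨hJ, hT⟩ := hp
    obtain ⟨hJind, hvJ, hadjJ⟩ := by simpa [outSets, mem_indSets] using hJ
    rw [mem_indSets]
    rcases Finset.mem_insert.1 hT with hTv | hTU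
    · subst hTv
      intro a ha b hb hab
      rcases Finset.mem_union.1 ha with ha | ha <;> rcases Finset.mem_union.1 hb with hb | hb
      · exact hJind a ha b hb hab
      · rw [Finset.mem_singleton] at hb; subst hb
        exact hadjJ a ha hab.symm
      · rw [Finset.mem_singleton] at ha; subst ha
        exact hadjJ b hb hab
      · rw [Finset.mem_singleton] at ha hb; subst ha; subst hb
        exact G.loopless.irrefl _ hab
    · have hTU' := Finset.mem_powerset.1 hTU
      have hTfacts : ∀ x ∈ T, x ∈ G.neighborFinset v ∧ ∀ w ∈ J, ¬ G.Adj x w := by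
        intro x hx
        have := Finset.mem_filter.1 (hTU' hx)
        exact ⟨this.1, this.2⟩
      intro a ha b hb hab
      rcases Finset.mem_union.1 ha with ha | ha <;> rcases Finset.mem_union.1 hb with hb | hb
      · exact hJind a ha b hb hab
      · exact (hTfacts b hb).2 a ha hab.symm
      · exact (hTfacts a ha).2 b hb hab
      · -- two adjacent vertices in N(v): triangle
        have hav : G.Adj v a := mem_nbr.1 (hTfacts a ha).1
        have hbv : G.Adj v b := mem_nbr.1 (hTfacts b hb).1
        exact htf {v, a, b} (SimpleGraph.is3Clique_triple_iff.2 ⟨hav, hbv, hab⟩)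
  · -- j maps into the sigma set
    intro s hs
    rw [mem_indSets] at hs
    rw [Finset.mem_sigma]
    dsimp only
    constructor
    · rw [outSets, Finset.mem_filter, mem_indSets]
      refine ⟨fun a ha b hb => hs a (Finset.mem_sdiff.1 ha).1 b (Finset.mem_sdiff.1 hb).1, ?_, ?_⟩
      · intro h
        exact (Finset.mem_sdiff.1 h).2 (Finset.mem_insert_self v _)
      · intro u hu hadj
        exact (Finset.mem_sdiff.1 hu).2
          (Finset.mem_insert_of_mem (mem_nbr.2 hadj))
    · by_cases hv : v ∈ s
      · have : s ∩ insert v (G.neighborFinset v) = {v} := by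
          ext x
          simp only [Finset.mem_inter, Finset.mem_insert, Finset.mem_singleton,
            SimpleGraph.mem_neighborFinset]
          constructor
          · rintro ⟨hxs, rfl | hadj⟩
            · rfl
            · exact absurd hadj (hs v hv x hxs)
          · rintro rfl; exact ⟨hv, Or.inl rfl⟩
        rw [this]
        exact Finset.mem_insert_self _ _
      · apply Finset.mem_insert_of_mem
        rw [Finset.mem_powerset]
        intro x hx
        obtain ⟨hxs, hxN⟩ := Finset.mem_inter.1 hx
        rcases Finset.mem_insert.1 hxN with rfl | hxN
        · exact absurd hxs hv
        rw [uncov, Finset.mem_filter]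
        refine ⟨hxN, fun w hw hadj => ?_⟩
        exact hs x hxs w (Finset.mem_sdiff.1 hw).1 hadj
  · -- left inverse
    rintro ⟨J, T⟩ hp
    rw [Finset.mem_sigma] at hp
    obtain ⟨hJ, hT⟩ := hp
    obtain ⟨hJdisj, hvmem, hinter⟩ := pair_facts hJ hT
    obtain ⟨hJind, hvJ, hadjJ⟩ := by simpa [outSets, mem_indSets] using hJ
    have hJclosed : ∀ x ∈ J, x ∉ insert v (G.neighborFinset v) := by
      intro x hx hmem
      rcases Finset.mem_insert.1 hmem with rfl | hN
      · exact hvJ hx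
      · exact hadjJ x hx (mem_nbr.1 hN)
    have hTsub : T ⊆ insert v (G.neighborFinset v) := by
      rcases Finset.mem_insert.1 hT with rfl | hTU
      · simp
      · intro x hx
        exact Finset.mem_insert_of_mem (Finset.mem_filter.1 (Finset.mem_powerset.1 hTU hx)).1
    have h1 : (J ∪ T) \ insert v (G.neighborFinset v) = J := by
      ext x
      simp only [Finset.mem_sdiff, Finset.mem_union]
      constructor
      · rintro ⟨hx1 | hx2, hxN⟩
        · exact hx1
        · exact absurd (hTsub hx2) hxN
      · intro hx; exact ⟨Or.inl hx, hJclosed x hx⟩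
    have h2 : (J ∪ T) ∩ insert v (G.neighborFinset v) = T := by
      ext x
      simp only [Finset.mem_inter, Finset.mem_union]
      constructor
      · rintro ⟨hx1 | hx2, hxN⟩
        · exact absurd hxN (hJclosed x hx1)
        · exact hx2
      · intro hx; exact ⟨Or.inr hx, hTsub hx⟩
    simp only [h1, h2]
  · -- right inverse
    intro s _
    show (s \ insert v (G.neighborFinset v)) ∪ (s ∩ insert v (G.neighborFinset v)) = s
    rw [Finset.sdiff_union_inter]
  · rintro ⟨J, T⟩ _; rfl

lemma sum_pow_card (l : ℝ) (U : Finset V) :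
    ∑ T ∈ U.powerset, l ^ T.card = (1 + l) ^ U.card := by
  induction U using Finset.induction_on with
  | empty => simp
  | @insert a s ha ih =>
    rw [Finset.sum_powerset_insert ha, ih, Finset.card_insert_of_notMem ha]
    have : ∀ t ∈ s.powerset, l ^ (insert a t).card = l * l ^ t.card := by
      intro t ht
      rw [Finset.card_insert_of_notMem (fun h => ha (Finset.mem_powerset.1 ht h))]
      ring
    rw [Finset.sum_congr rfl this, ← Finset.mul_sum, ih, pow_succ]
    ring

lemma sum_card_pow_card (l : ℝ) (U : Finset V) :
    ∑ T ∈ U.powerset, (T.card : ℝ) * l ^ T.card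
      = U.card * l * (1 + l) ^ (U.card - 1) := by
  induction U using Finset.induction_on with
  | empty => simp
  | @insert a s ha ih =>
    rw [Finset.sum_powerset_insert ha, ih, Finset.card_insert_of_notMem ha]
    have : ∀ t ∈ s.powerset, ((insert a t).card : ℝ) * l ^ (insert a t).card
        = l * ((t.card : ℝ) * l ^ t.card) + l * l ^ t.card := by
      intro t ht
      rw [Finset.card_insert_of_notMem (fun h => ha (Finset.mem_powerset.1 ht h))]
      push_cast
      ring
    rw [Finset.sum_congr rfl this, Finset.sum_add_distrib, ← Finset.mul_sum, ← Finset.mul_sum,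
      ih, sum_pow_card]
    have hexp : #s + 1 - 1 = #s := by omega
    rw [hexp]
    push_cast
    linear_combination (cast_mul_pow_pred (1 + l) s.card) * l

lemma card_union_local {G : SimpleGraph V} {v : V} {J T : Finset V}
    (hJ : J ∈ outSets G v) (hT : T ∈ localSets G v J) :
    (J ∪ T).card = J.card + T.card :=
  Finset.card_union_of_disjoint (pair_facts hJ hT).1

lemma inner_sum_W {G : SimpleGraph V} {v : V} {J : Finset V} (hJ : J ∈ outSets G v) (l : ℝ) :
    ∑ T ∈ localSets G v J, l ^ (J ∪ T).card
      = l ^ J.card * ((1 + l) ^ (uncov G v J).card + l) := by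
  rw [localSets, Finset.sum_insert (singleton_not_mem_powerset_uncov G v J)]
  have h1 : (J ∪ {v}).card = J.card + 1 := by
    rw [card_union_local hJ (Finset.mem_insert_self _ _), Finset.card_singleton]
  have h2 : ∀ T ∈ (uncov G v J).powerset, l ^ (J ∪ T).card = l ^ J.card * l ^ T.card := by
    intro T hT
    rw [card_union_local hJ (Finset.mem_insert_of_mem hT), pow_add]
  rw [h1, Finset.sum_congr rfl h2, ← Finset.mul_sum, sum_pow_card, pow_succ]
  ring

lemma inner_sum_X {G : SimpleGraph V} {v : V} {J : Finset V} (hJ : J ∈ outSets G v) (l : ℝ) :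
    ∑ T ∈ localSets G v J, (if v ∈ J ∪ T then (1:ℝ) else 0) * l ^ (J ∪ T).card
      = l ^ J.card * l := by
  rw [localSets, Finset.sum_insert (singleton_not_mem_powerset_uncov G v J)]
  have h1 : (J ∪ {v}).card = J.card + 1 := by
    rw [card_union_local hJ (Finset.mem_insert_self _ _), Finset.card_singleton]
  have hv1 : v ∈ J ∪ {v} := Finset.mem_union_right _ (Finset.mem_singleton_self v)
  have h2 : ∀ T ∈ (uncov G v J).powerset,
      (if v ∈ J ∪ T then (1:ℝ) else 0) * l ^ (J ∪ T).card = 0 := by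
    intro T hT
    have hp := (pair_facts hJ (Finset.mem_insert_of_mem hT)).2.1
    have hne : T ≠ {v} := by
      intro h; subst h
      exact singleton_not_mem_powerset_uncov G v J hT
    rw [if_neg (fun hv => hne (hp.1 hv)), zero_mul]
  rw [h1, if_pos hv1, one_mul, Finset.sum_congr rfl h2, Finset.sum_const_zero, pow_succ]
  ring

lemma inner_sum_Y {G : SimpleGraph V} {v : V} {J : Finset V} (hJ : J ∈ outSets G v) (l : ℝ) :
    ∑ T ∈ localSets G v J, (((J ∪ T) ∩ G.neighborFinset v).card : ℝ) * l ^ (J ∪ T).card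
      = l ^ J.card * (((uncov G v J).card : ℝ) * l * (1 + l) ^ ((uncov G v J).card - 1)) := by
  rw [localSets, Finset.sum_insert (singleton_not_mem_powerset_uncov G v J)]
  have hfirst : ((J ∪ {v}) ∩ G.neighborFinset v) = ∅ := by
    have hp := (pair_facts hJ (Finset.mem_insert_self _ _)).2.2
    rw [hp, Finset.sdiff_self]
  have h2 : ∀ T ∈ (uncov G v J).powerset,
      (((J ∪ T) ∩ G.neighborFinset v).card : ℝ) * l ^ (J ∪ T).card
        = l ^ J.card * ((T.card : ℝ) * l ^ T.card) := by
    intro T hT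
    have hp := (pair_facts hJ (Finset.mem_insert_of_mem hT)).2.2
    have hvT : v ∉ T := fun h =>
      v_not_mem_uncov G v J (Finset.mem_powerset.1 hT h)
    rw [hp, Finset.sdiff_singleton_eq_erase, Finset.erase_eq_of_notMem hvT,
      card_union_local hJ (Finset.mem_insert_of_mem hT), pow_add]
    ring
  rw [hfirst, Finset.sum_congr rfl h2, ← Finset.mul_sum, sum_card_pow_card]
  simp

lemma uncov_card_le {G : SimpleGraph V} {d : ℕ} (hreg : ∀ w, G.degree w = d)
    (v : V) (J : Finset V) : (uncov G v J).card ≤ d := by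
  calc (uncov G v J).card ≤ (G.neighborFinset v).card := Finset.card_le_card (Finset.filter_subset _ _)
    _ = d := by rw [SimpleGraph.card_neighborFinset_eq_degree, hreg]

/-- The per-vertex linear-programming constraint combination. -/
lemma per_vertex {G : SimpleGraph V} (htf : G.CliqueFree 3) {d : ℕ} (hd : 1 ≤ d)
    (hreg : ∀ w, G.degree w = d) (v : V) (l : ℝ) (hl : 0 < l) :
    (1 + (1 - (1+l)^d) / ((d:ℝ) * (2*(1+l)^d - 1)) * d)
        * (∑ s ∈ indSets G, (if v ∈ s then (1:ℝ) else 0) * l ^ s.card)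
      - (1 - (1+l)^d) / ((d:ℝ) * (2*(1+l)^d - 1))
        * (∑ s ∈ indSets G, ((s ∩ G.neighborFinset v).card : ℝ) * l ^ s.card)
    ≤ (l * (1+l)^(d-1) / (2*(1+l)^d - 1)) * indPoly G l := by
  set c : ℝ := (1 - (1+l)^d) / ((d:ℝ) * (2*(1+l)^d - 1)) with hc
  set α : ℝ := l * (1+l)^(d-1) / (2*(1+l)^d - 1) with hα
  rw [partition G htf v (fun s => (if v ∈ s then (1:ℝ) else 0) * l ^ s.card),
    partition G htf v (fun s => ((s ∩ G.neighborFinset v).card : ℝ) * l ^ s.card),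
    indPoly, partition G htf v (fun s => l ^ s.card)]
  rw [Finset.mul_sum, Finset.mul_sum, ← Finset.sum_sub_distrib, Finset.mul_sum]
  refine Finset.sum_le_sum ?_
  intro J hJ
  rw [inner_sum_X hJ l, inner_sum_Y hJ l, inner_sum_W hJ l]
  have hloc := local_ineq l hl d (uncov G v J).card hd (uncov_card_le hreg v J)
  rw [← hc, ← hα] at hloc
  calc (1 + c * d) * (l ^ J.card * l)
        - c * (l ^ J.card * (((uncov G v J).card:ℝ) * l * (1+l) ^ ((uncov G v J).card - 1)))
      = l ^ J.card * (l * (1 + c * d)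
          - c * (((uncov G v J).card:ℝ) * l * (1+l) ^ ((uncov G v J).card - 1))) := by ring
    _ ≤ l ^ J.card * (α * ((1+l) ^ (uncov G v J).card + l)) :=
        mul_le_mul_of_nonneg_left hloc (pow_nonneg hl.le _)
    _ = α * (l ^ J.card * ((1+l) ^ (uncov G v J).card + l)) := by ring

lemma count_inter (G : SimpleGraph V) {d : ℕ} (hreg : ∀ w, G.degree w = d) (s : Finset V) :
    ∑ v : V, (s ∩ G.neighborFinset v).card = d * s.card := by
  have h1 : ∀ v : V, (s ∩ G.neighborFinset v).card = ∑ u ∈ s, if G.Adj v u then 1 else 0 := by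
    intro v
    rw [← Finset.filter_mem_eq_inter, Finset.card_filter]
    exact Finset.sum_congr rfl fun u _ => by simp only [mem_nbr]
  simp only [h1]
  rw [Finset.sum_comm]
  have h2 : ∀ u ∈ s, ∑ v : V, (if G.Adj v u then 1 else 0) = d := by
    intro u _
    have : Finset.univ.filter (fun v => G.Adj v u) = G.neighborFinset u := by
      ext w
      simp [mem_nbr, G.adj_comm]
    rw [← Finset.card_filter, this, SimpleGraph.card_neighborFinset_eq_degree, hreg]
  rw [Finset.sum_congr rfl h2, Finset.sum_const, smul_eq_mul, mul_comm]

end Aux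

theorem stmt8 {V : Type*} [Fintype V] [Nonempty V] (G : SimpleGraph V) (d : ℕ)
    (hd : 1 ≤ d) (htf : G.CliqueFree 3) (hreg : ∀ v, G.degree v = d)
    (l : ℝ) (hl : 0 < l) :
    avgSize G l / (Fintype.card V : ℝ)
      ≤ l * (1 + l) ^ (d - 1) / (2 * (1 + l) ^ d - 1) := by
  have hb : (0:ℝ) < 1 + l := by linarith
  have hn0 : (0:ℝ) < (Fintype.card V : ℝ) := by exact_mod_cast Fintype.card_pos
  set A : ℝ := ∑ s ∈ indSets G, (s.card : ℝ) * l ^ s.card with hA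
  set W : ℝ := indPoly G l with hW
  set α : ℝ := l * (1 + l) ^ (d - 1) / (2 * (1 + l) ^ d - 1) with hα
  set c : ℝ := (1 - (1+l)^d) / ((d:ℝ) * (2*(1+l)^d - 1)) with hc
  -- positivity of the partition function
  have hW0 : 0 < W := by
    rw [hW, indPoly]
    have hempty : (∅ : Finset V) ∈ indSets G := by simp [mem_indSets]
    have hle := Finset.single_le_sum (f := fun s : Finset V => l ^ s.card)
      (fun s _ => (pow_pos hl _).le) hempty
    simp only [Finset.card_empty, pow_zero] at hle
    linarith
  -- the derivative of the independence polynomial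
  have hderiv : deriv (indPoly G) l = ∑ s ∈ indSets G, (s.card:ℝ) * l ^ (s.card - 1) := by
    have h2 : HasDerivAt (fun x : ℝ => ∑ s ∈ indSets G, x ^ s.card)
        (∑ s ∈ indSets G, (s.card:ℝ) * l ^ (s.card - 1)) l :=
      HasDerivAt.fun_sum (fun (s : Finset V) _ => hasDerivAt_pow s.card l)
    have h3 : indPoly G = fun x : ℝ => ∑ s ∈ indSets G, x ^ s.card := by
      funext x; rw [indPoly]
    rw [h3]
    exact h2.deriv
  have havg : avgSize G l = A / W := by
    rw [avgSize, hderiv, Finset.mul_sum, ← hW, hA]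
    congr 1
    refine Finset.sum_congr rfl (fun s _ => ?_)
    rw [← cast_mul_pow_pred l s.card]; ring
  -- sum the per-vertex inequality over all vertices
  have hper := Finset.sum_le_sum (s := (Finset.univ : Finset V))
    (fun v _ => per_vertex htf hd hreg v l hl)
  rw [Finset.sum_const, Finset.card_univ] at hper
  rw [Finset.sum_sub_distrib, ← Finset.mul_sum, ← Finset.mul_sum, Finset.sum_comm] at hper
  rw [Finset.sum_comm (s := Finset.univ) (t := indSets G)] at hper
  -- identify the two double sums
  have hXsum : ∑ s ∈ indSets G, ∑ v : V, (if v ∈ s then (1:ℝ) else 0) * l ^ s.card = A := by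
    rw [hA]
    refine Finset.sum_congr rfl (fun s _ => ?_)
    rw [← Finset.sum_mul]
    congr 1
    simp
  have hYsum : ∑ s ∈ indSets G, ∑ v : V, ((s ∩ G.neighborFinset v).card : ℝ) * l ^ s.card
      = (d:ℝ) * A := by
    rw [hA, Finset.mul_sum]
    refine Finset.sum_congr rfl (fun s _ => ?_)
    rw [← Finset.sum_mul]
    have hcnt : ∑ v : V, ((s ∩ G.neighborFinset v).card : ℝ) = (d:ℝ) * s.card := by
      have := count_inter G hreg s
      exact_mod_cast congrArg (Nat.cast : ℕ → ℝ) this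
    rw [hcnt]; ring
  rw [hXsum, hYsum] at hper
  have hfinal : A ≤ (Fintype.card V : ℝ) * (α * W) := by
    calc A = (1 + c * (d:ℝ)) * A - c * ((d:ℝ) * A) := by ring
      _ ≤ (Fintype.card V : ℝ) * (α * W) := by
          rw [← hW, ← hα, ← hc] at hper
          simpa [nsmul_eq_mul] using hper
  rw [havg, div_div, div_le_iff₀ (by positivity)]
  calc A ≤ (Fintype.card V : ℝ) * (α * W) := hfinal
    _ = α * (W * (Fintype.card V : ℝ)) := by ring
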